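/- Let G be a topological group with finitely many connected components acting cocompactly (by left translations, say via quotient) on itself modulo a discrete subgroup Γ, i.e., G/Γ is compact. Then for the identity component G⁰, the subgroup Γ₀ := Γ ∩ G⁰ satisfies that G⁰/Γ₀ is compact. -/

import Mathlib

open scoped Pointwise

/-- If `Γ` is a discrete subgroup of a topological group `G` with `G ⧸ Γ`
compact, then for the identity component `G⁰` and `Γ₀ = Γ ∩ G⁰`, the quotient `G⁰ ⧸ Γ₀`
is compact. -/
theorem stmt1 {G : Type*} [Group G] [TopologicalSpace G] [IsTopologicalGroup G]
    (hfin : Finite (ConnectedComponents G))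
    (Γ : Subgroup G) [DiscreteTopology Γ] (hcpt : CompactSpace (G ⧸ Γ)) :
    CompactSpace ((Subgroup.connectedComponentOfOne G) ⧸
      ((Γ ⊓ Subgroup.connectedComponentOfOne G).subgroupOf
        (Subgroup.connectedComponentOfOne G))) := by
  set H := Subgroup.connectedComponentOfOne G with hHdef
  set Γ₀ := (Γ ⊓ H).subgroupOf H with hΓ₀def
  -- `H` is open since there are finitely many connected components
  have hHopen : IsOpen (H : Set G) := by
    have h1 : (H : Set G) = connectedComponent (1 : G) := rfl
    rw [h1, ← connectedComponents_preimage_singleton, ← isClosed_compl_iff,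
      ← Set.preimage_compl]
    have h2 : ({((1:G) : ConnectedComponents G)}ᶜ : Set (ConnectedComponents G)) =
        ⋃ c ∈ ({((1:G) : ConnectedComponents G)}ᶜ : Set (ConnectedComponents G)), {c} :=
      (Set.biUnion_of_singleton _).symm
    rw [h2, Set.preimage_iUnion₂]
    apply Set.Finite.isClosed_biUnion (Set.toFinite _)
    intro c _
    obtain ⟨x, rfl⟩ := ConnectedComponents.surjective_coe c
    rw [connectedComponents_preimage_singleton]
    exact isClosed_connectedComponent
  -- `H` is normal
  have hnorm : ∀ g h : G, h ∈ H → g * h * g⁻¹ ∈ H := by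
    intro g h hh
    have hc : Continuous fun x : G => g * x * g⁻¹ := by continuity
    have hsub := hc.image_connectedComponent_subset (1 : G)
    have hmem : g * h * g⁻¹ ∈ (fun x : G => g * x * g⁻¹) '' connectedComponent (1 : G) :=
      ⟨h, hh, rfl⟩
    have := hsub hmem
    exact (by simpa using this : g * h * g⁻¹ ∈ connectedComponent (1 : G))
  -- `Γ * H` is closed, hence `H * Γ` is closed
  have hΓH : IsClosed ((Γ : Set G) * (H : Set G)) := by
    rw [← isOpen_compl_iff]
    have key : ((Γ : Set G) * (H : Set G))ᶜ = ((Γ : Set G) * (H : Set G))ᶜ * (H : Set G) := by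
      apply Set.Subset.antisymm
      · intro x hx
        exact ⟨x, hx, 1, H.one_mem, mul_one x⟩
      · rintro _ ⟨x, hx, h, hh, rfl⟩ hmem
        apply hx
        obtain ⟨γ, hγ, h', hh', hEq⟩ := hmem
        refine ⟨γ, hγ, h' * h⁻¹, H.mul_mem hh' (H.inv_mem hh), ?_⟩
        have hEq' : γ * h' = x * h := hEq
        show γ * (h' * h⁻¹) = x
        rw [← mul_assoc, hEq', mul_assoc, mul_inv_cancel, mul_one]
    rw [key]
    exact hHopen.mul_left
  have hHΓ : (H : Set G) * (Γ : Set G) = (Γ : Set G) * (H : Set G) := by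
    apply Set.Subset.antisymm
    · rintro _ ⟨h, hh, γ, hγ, rfl⟩
      refine ⟨γ, hγ, γ⁻¹ * h * γ, ?_, by group⟩
      simpa using hnorm γ⁻¹ h hh
    · rintro _ ⟨γ, hγ, h, hh, rfl⟩
      exact ⟨γ * h * γ⁻¹, hnorm γ h hh, γ, hγ, by group⟩
  -- the natural map `H ⧸ Γ₀ → G ⧸ Γ`
  let f : H ⧸ Γ₀ → G ⧸ Γ := fun x =>
    Quotient.liftOn' x (fun h => ((h : G) : G ⧸ Γ)) (by
      intro a b hab
      rw [QuotientGroup.leftRel_apply, hΓ₀def, Subgroup.mem_subgroupOf] at hab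
      exact (QuotientGroup.eq).2 hab.1)
  have hcomm : ∀ h : H, f (QuotientGroup.mk h) = QuotientGroup.mk (h : G) := fun h => rfl
  have hcont : Continuous f :=
    (QuotientGroup.isQuotientMap_mk Γ₀).continuous_iff.2
      (QuotientGroup.continuous_mk.comp continuous_subtype_val)
  have hinj : Function.Injective f := by
    intro x y
    induction x using QuotientGroup.induction_on with | H a =>
    induction y using QuotientGroup.induction_on with | H b =>
    intro hab
    rw [hcomm a, hcomm b, QuotientGroup.eq] at hab
    rw [QuotientGroup.eq, hΓ₀def, Subgroup.mem_subgroupOf]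
    exact ⟨by simpa using hab, ((a : H)⁻¹ * b).2⟩
  have hopenmap : IsOpenMap f := by
    intro U hU
    have himg : f '' U =
        QuotientGroup.mk '' (Subtype.val '' ((QuotientGroup.mk : H → H ⧸ Γ₀) ⁻¹' U)) := by
      ext z
      constructor
      · rintro ⟨x, hx, rfl⟩
        induction x using QuotientGroup.induction_on with | H h =>
        exact ⟨(h : G), ⟨h, hx, rfl⟩, (hcomm h).symm⟩
      · rintro ⟨_, ⟨h, hh, rfl⟩, rfl⟩
        exact ⟨QuotientGroup.mk h, hh, rfl⟩
    rw [himg]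
    exact QuotientGroup.isOpenMap_coe _
      (hHopen.isOpenMap_subtype_val _ (hU.preimage QuotientGroup.continuous_mk))
  have hrange : Set.range f = QuotientGroup.mk '' (H : Set G) := by
    ext z
    constructor
    · rintro ⟨x, rfl⟩
      induction x using QuotientGroup.induction_on with | H h =>
      exact ⟨(h : G), h.2, (hcomm h).symm⟩
    · rintro ⟨g, hg, rfl⟩
      exact ⟨QuotientGroup.mk (⟨g, hg⟩ : H), rfl⟩
  have hclosedrange : IsClosed (Set.range f) := by
    rw [hrange, ← (QuotientGroup.isQuotientMap_mk Γ).isClosed_preimage,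
      QuotientGroup.preimage_image_mk_eq_mul, hHΓ]
    exact hΓH
  have hcompact : IsCompact (Set.range f) := hclosedrange.isCompact
  have hemb := Topology.IsOpenEmbedding.of_continuous_injective_isOpenMap hcont hinj hopenmap
  constructor
  rw [hemb.isEmbedding.isCompact_iff, Set.image_univ]
  exact hcompact
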